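/- Let X̄₁ and X̄₂ be compact metrizable spaces. Suppose Dᵢ ⊆ X̄ᵢ is a countable dense set of isolated points of X̄ᵢ for i = 1, 2, and set ∂ᵢ := X̄ᵢ \ Dᵢ (assumed closed). Let ∂f : ∂₁ → ∂₂ be a homeomorphism and let πᵢ : Dᵢ → ∂ᵢ be nearest-point projections (d(x, πᵢ(x)) = dist(x, ∂ᵢ)). Then there exists a bijection f : D₁ → D₂ such that the combined map F : X̄₁ → X̄₂, defined by F = f on D₁ and F = ∂f on ∂₁, is a homeomorphism. -/
import Mathlib

open Metric Set

section AuxLemmas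

lemma aux_finite_far {X : Type*} [MetricSpace X] [CompactSpace X] {D : Set X}
    (hiso : ∀ x ∈ D, IsOpen ({x} : Set X)) {ε : ℝ} (hε : 0 < ε) :
    {x | x ∈ D ∧ ε ≤ Metric.infDist x Dᶜ}.Finite := by
  set S := {x | x ∈ D ∧ ε ≤ Metric.infDist x Dᶜ} with hS
  have hclos : closure S ⊆ S := by
    intro y hy
    have h1 : ε ≤ Metric.infDist y Dᶜ := by
      have : y ∈ closure {x | ε ≤ Metric.infDist x Dᶜ} :=
        closure_mono (fun x hx => hx.2) hy
      have hcl : IsClosed {x | ε ≤ Metric.infDist x Dᶜ} :=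
        isClosed_le continuous_const (Metric.continuous_infDist_pt _)
      exact hcl.closure_subset this
    have hyD : y ∈ D := by
      by_contra hyD
      have : Metric.infDist y Dᶜ = 0 := Metric.infDist_zero_of_mem hyD
      rw [this] at h1; linarith
    rcases mem_closure_iff.mp hy ({y}) (hiso y hyD) rfl with ⟨z, hz1, hz2⟩
    rw [Set.mem_singleton_iff] at hz1
    rwa [← hz1]
  have hSc : IsClosed S := closure_subset_iff_isClosed.mp hclos
  have hcomp : IsCompact S := hSc.isCompact
  obtain ⟨b', hb'S, hb'fin, hcov⟩ := hcomp.elim_finite_subcover_image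
    (fun x (hx : x ∈ S) => hiso x hx.1) (fun x hx => Set.mem_biUnion hx rfl)
  refine hb'fin.subset ?_
  intro x hx
  rcases Set.mem_iUnion₂.mp (hcov hx) with ⟨y, hy, hxy⟩
  rw [Set.mem_singleton_iff] at hxy
  exact hxy ▸ hy

lemma aux_dense_avoid {X : Type*} [MetricSpace X] {D : Set X} (hd : Dense D)
    {w : X} (hw : w ∉ D) {s : Set X} (hs : s.Finite) (hsD : s ⊆ D) {r : ℝ} (hr : 0 < r) :
    ∃ b ∈ D, b ∉ s ∧ dist b w < r := by
  have hU : IsOpen (Metric.ball w r \ s) := Metric.isOpen_ball.sdiff hs.isClosed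
  have hwU : w ∈ Metric.ball w r \ s :=
    ⟨Metric.mem_ball_self hr, fun h => hw (hsD h)⟩
  obtain ⟨b, hbD, hbU⟩ := hd.exists_mem_open hU ⟨w, hwU⟩
  exact ⟨b, hbD, hbU.2, Metric.mem_ball.mp hbU.1⟩

lemma aux_finite_inv {c : ℝ} (hc : 0 < c) : {n : ℕ | c ≤ 1/((n:ℝ)+1)}.Finite := by
  refine (Set.finite_Iic ⌈1/c⌉₊).subset ?_
  intro n hn
  simp only [Set.mem_setOf_eq] at hn
  have h1 : (n:ℝ) + 1 ≤ 1/c := by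
    rw [le_div_iff₀ hc]
    have h2 : (0:ℝ) < (n:ℝ)+1 := by positivity
    rw [le_div_iff₀ h2] at hn
    linarith [hn]
  have : (n:ℝ) ≤ ⌈1/c⌉₊ := le_trans (by linarith) (Nat.le_ceil _)
  exact Set.mem_Iic.mpr (by exact_mod_cast this)

open Classical in
noncomputable def pick2 {X : Type*} (P : X → Prop) (z : X) : X :=
  if h : ∃ b, P b then h.choose else z

open Classical in
lemma pick2_spec {X : Type*} {P : X → Prop} (z : X) (h : ∃ b, P b) : P (pick2 P z) := by
  rw [pick2, dif_pos h]; exact h.choose_spec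

open Classical in
noncomputable def pick1 {X : Type*} (e : ℕ → X) (z : X) (used : List X) : X :=
  if h : ∃ k, e k ∉ used then e (Nat.find h) else z

open Classical in
lemma pick1_spec {X : Type*} (e : ℕ → X) (z : X) (used : List X)
    (h : ∃ k, e k ∉ used) : pick1 e z used = e (Nat.find h) := dif_pos h

open Classical in
lemma pick1_eq {X : Type*} (e : ℕ → X) (z : X) (used : List X) {k : ℕ}
    (hk : e k ∉ used) (hmin : ∀ j < k, e j ∈ used) : pick1 e z used = e k := by
  have h : ∃ k, e k ∉ used := ⟨k, hk⟩
  rw [pick1_spec e z used h]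
  congr 1
  rw [Nat.find_eq_iff]
  exact ⟨hk, fun j hj => not_not_intro (hmin j hj)⟩

open Classical in
lemma pick1_not_mem {X : Type*} (e : ℕ → X) (z : X) (used : List X)
    (h : ∃ k, e k ∉ used) : pick1 e z used ∉ used := by
  rw [pick1_spec e z used h]; exact Nat.find_spec h

open Classical in
lemma pick1_mem_range {X : Type*} (e : ℕ → X) (z : X) (used : List X)
    (h : ∃ k, e k ∉ used) : ∃ k, pick1 e z used = e k := ⟨_, pick1_spec e z used h⟩

noncomputable def bfStep {X₁ X₂ : Type*} [MetricSpace X₁] [MetricSpace X₂]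
    (D₁ : Set X₁) (D₂ : Set X₂) (e₁ : ℕ → X₁) (e₂ : ℕ → X₂)
    (ψ : X₁ → X₂) (φ : X₂ → X₁) (z₁ : X₁) (z₂ : X₂)
    (n : ℕ) (l : List (X₁ × X₂)) : X₁ × X₂ :=
  if Even n then
    (pick1 e₁ z₁ (l.map Prod.fst),
     pick2 (fun b => b ∈ D₂ ∧ b ∉ l.map Prod.snd ∧
       dist b (ψ (pick1 e₁ z₁ (l.map Prod.fst))) <
         Metric.infDist (pick1 e₁ z₁ (l.map Prod.fst)) D₁ᶜ + 1/((n:ℝ)+1)) z₂)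
  else
    (pick2 (fun a => a ∈ D₁ ∧ a ∉ l.map Prod.fst ∧
       dist a (φ (pick1 e₂ z₂ (l.map Prod.snd))) < 1/((n:ℝ)+1)) z₁,
     pick1 e₂ z₂ (l.map Prod.snd))

noncomputable def bfList {X₁ X₂ : Type*} [MetricSpace X₁] [MetricSpace X₂]
    (D₁ : Set X₁) (D₂ : Set X₂) (e₁ : ℕ → X₁) (e₂ : ℕ → X₂)
    (ψ : X₁ → X₂) (φ : X₂ → X₁) (z₁ : X₁) (z₂ : X₂) : ℕ → List (X₁ × X₂)
  | 0 => []
  | n+1 => bfList D₁ D₂ e₁ e₂ ψ φ z₁ z₂ n ++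
      [bfStep D₁ D₂ e₁ e₂ ψ φ z₁ z₂ n (bfList D₁ D₂ e₁ e₂ ψ φ z₁ z₂ n)]

end AuxLemmas

theorem stmt_8 {X₁ X₂ : Type*} [MetricSpace X₁] [CompactSpace X₁]
    [MetricSpace X₂] [CompactSpace X₂]
    (D₁ : Set X₁) (D₂ : Set X₂)
    (hc₁ : D₁.Countable) (hc₂ : D₂.Countable)
    (hi₁ : D₁.Infinite) (hi₂ : D₂.Infinite)
    (hd₁ : Dense D₁) (hd₂ : Dense D₂)
    (hiso₁ : ∀ x ∈ D₁, IsOpen ({x} : Set X₁))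
    (hiso₂ : ∀ x ∈ D₂, IsOpen ({x} : Set X₂))
    (hcl₁ : IsClosed D₁ᶜ) (hcl₂ : IsClosed D₂ᶜ)
    (hne₁ : D₁ᶜ.Nonempty) (hne₂ : D₂ᶜ.Nonempty)
    (bf : (D₁ᶜ : Set X₁) ≃ₜ (D₂ᶜ : Set X₂))
    (π₁ : X₁ → X₁) (π₂ : X₂ → X₂)
    (hπ₁ : ∀ x ∈ D₁, π₁ x ∈ D₁ᶜ ∧ dist x (π₁ x) = Metric.infDist x D₁ᶜ)
    (hπ₂ : ∀ x ∈ D₂, π₂ x ∈ D₂ᶜ ∧ dist x (π₂ x) = Metric.infDist x D₂ᶜ) :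
    ∃ F : X₁ ≃ₜ X₂, F '' D₁ = D₂ ∧
      ∀ x : (D₁ᶜ : Set X₁), F (x : X₁) = (bf x : X₂) := by
  classical
  obtain ⟨z₁, hz₁⟩ := hne₁
  obtain ⟨z₂, hz₂⟩ := hne₂
  -- enumerations
  haveI := hc₁.to_subtype
  haveI := hi₁.to_subtype
  haveI := hc₂.to_subtype
  haveI := hi₂.to_subtype
  obtain ⟨d₁⟩ := nonempty_denumerable ↥D₁
  obtain ⟨d₂⟩ := nonempty_denumerable ↥D₂
  set e₁ : ℕ → X₁ := fun k => ((Denumerable.eqv ↥D₁).symm k : ↥D₁) with he₁def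
  set e₂ : ℕ → X₂ := fun k => ((Denumerable.eqv ↥D₂).symm k : ↥D₂) with he₂def
  have he₁mem : ∀ k, e₁ k ∈ D₁ := fun k => ((Denumerable.eqv ↥D₁).symm k).2
  have he₂mem : ∀ k, e₂ k ∈ D₂ := fun k => ((Denumerable.eqv ↥D₂).symm k).2
  have he₁surj : ∀ x ∈ D₁, ∃ k, e₁ k = x := fun x hx =>
    ⟨(Denumerable.eqv ↥D₁) ⟨x, hx⟩, by simp [he₁def]⟩
  have he₂surj : ∀ y ∈ D₂, ∃ k, e₂ k = y := fun y hy =>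
    ⟨(Denumerable.eqv ↥D₂) ⟨y, hy⟩, by simp [he₂def]⟩
  -- boundary maps
  set Φc : (D₁ᶜ : Set X₁) → X₂ := fun w => (bf w : X₂) with hΦcdef
  set Ψc : (D₂ᶜ : Set X₂) → X₁ := fun w => (bf.symm w : X₁) with hΨcdef
  set ψ : X₁ → X₂ := fun a => if h : π₁ a ∈ D₁ᶜ then Φc ⟨π₁ a, h⟩ else z₂ with hψdef
  set φ : X₂ → X₁ := fun b => if h : π₂ b ∈ D₂ᶜ then Ψc ⟨π₂ b, h⟩ else z₁ with hφdef
  have hψval : ∀ a (ha : a ∈ D₁), ψ a = Φc ⟨π₁ a, (hπ₁ a ha).1⟩ := by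
    intro a ha; rw [hψdef]; simp only; rw [dif_pos (hπ₁ a ha).1]
  have hφval : ∀ b (hb : b ∈ D₂), φ b = Ψc ⟨π₂ b, (hπ₂ b hb).1⟩ := by
    intro b hb; rw [hφdef]; simp only; rw [dif_pos (hπ₂ b hb).1]
  have hψmem : ∀ a ∈ D₁, ψ a ∈ D₂ᶜ := by
    intro a ha; rw [hψval a ha]; exact (bf _).2
  have hφmem : ∀ b ∈ D₂, φ b ∈ D₁ᶜ := by
    intro b hb; rw [hφval b hb]; exact (bf.symm _).2
  -- the construction
  set st : ℕ → List (X₁ × X₂) → X₁ × X₂ := bfStep D₁ D₂ e₁ e₂ ψ φ z₁ z₂ with hstdef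
  set S : ℕ → List (X₁ × X₂) := bfList D₁ D₂ e₁ e₂ ψ φ z₁ z₂ with hSdef
  have hS0 : S 0 = [] := rfl
  have hSs : ∀ n, S (n+1) = S n ++ [st n (S n)] := fun n => rfl
  set A : ℕ → X₁ := fun n => (st n (S n)).1 with hAdef
  set B : ℕ → X₂ := fun n => (st n (S n)).2 with hBdef
  have memS : ∀ n p, p ∈ S n ↔ ∃ m, m < n ∧ (A m, B m) = p := by
    intro n
    induction n with
    | zero => intro p; rw [hS0]; simp
    | succ n ih =>
      intro p
      rw [hSs n, List.mem_append, List.mem_singleton, ih]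
      constructor
      · rintro (⟨m, hm, hp⟩ | hp)
        · exact ⟨m, Nat.lt_succ_of_lt hm, hp⟩
        · exact ⟨n, Nat.lt_succ_self n, hp.symm⟩
      · rintro ⟨m, hm, hp⟩
        rcases Nat.lt_succ_iff_lt_or_eq.mp hm with h | h
        · exact Or.inl ⟨m, h, hp⟩
        · subst h; exact Or.inr hp.symm
  have memfst : ∀ n x, x ∈ (S n).map Prod.fst ↔ ∃ m, m < n ∧ A m = x := by
    intro n x
    rw [List.mem_map]
    constructor
    · rintro ⟨p, hp, rfl⟩
      rcases (memS n p).mp hp with ⟨m, hm, hpe⟩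
      exact ⟨m, hm, by rw [← hpe]⟩
    · rintro ⟨m, hm, rfl⟩
      exact ⟨(A m, B m), (memS n _).mpr ⟨m, hm, rfl⟩, rfl⟩
  have memsnd : ∀ n y, y ∈ (S n).map Prod.snd ↔ ∃ m, m < n ∧ B m = y := by
    intro n y
    rw [List.mem_map]
    constructor
    · rintro ⟨p, hp, rfl⟩
      rcases (memS n p).mp hp with ⟨m, hm, hpe⟩
      exact ⟨m, hm, by rw [← hpe]⟩
    · rintro ⟨m, hm, rfl⟩
      exact ⟨(A m, B m), (memS n _).mpr ⟨m, hm, rfl⟩, rfl⟩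
  -- existence of unused enumeration elements
  have hex1 : ∀ n, ∃ k, e₁ k ∉ (S n).map Prod.fst := by
    intro n
    by_contra h
    push_neg at h
    have hsub : D₁ ⊆ {x | x ∈ (S n).map Prod.fst} := by
      intro x hx
      obtain ⟨k, rfl⟩ := he₁surj x hx
      exact h k
    exact hi₁ (((S n).map Prod.fst).finite_toSet.subset hsub)
  have hex2 : ∀ n, ∃ k, e₂ k ∉ (S n).map Prod.snd := by
    intro n
    by_contra h
    push_neg at h
    have hsub : D₂ ⊆ {y | y ∈ (S n).map Prod.snd} := by
      intro y hy
      obtain ⟨k, rfl⟩ := he₂surj y hy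
      exact h k
    exact hi₂ (((S n).map Prod.snd).finite_toSet.subset hsub)
  -- step equations
  have hstepE : ∀ n, Even n → st n (S n) =
      (pick1 e₁ z₁ ((S n).map Prod.fst),
       pick2 (fun b => b ∈ D₂ ∧ b ∉ (S n).map Prod.snd ∧
         dist b (ψ (pick1 e₁ z₁ ((S n).map Prod.fst))) <
           Metric.infDist (pick1 e₁ z₁ ((S n).map Prod.fst)) D₁ᶜ + 1/((n:ℝ)+1)) z₂) := by
    intro n hn; rw [hstdef]; rw [bfStep, if_pos hn]
  have hstepO : ∀ n, ¬ Even n → st n (S n) =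
      (pick2 (fun a => a ∈ D₁ ∧ a ∉ (S n).map Prod.fst ∧
         dist a (φ (pick1 e₂ z₂ ((S n).map Prod.snd))) < 1/((n:ℝ)+1)) z₁,
       pick1 e₂ z₂ ((S n).map Prod.snd)) := by
    intro n hn; rw [hstdef]; rw [bfStep, if_neg hn]
  have hA1 : ∀ n, Even n → A n ∈ D₁ ∧ A n ∉ (S n).map Prod.fst := by
    intro n hn
    have h1 : A n = pick1 e₁ z₁ ((S n).map Prod.fst) := congrArg Prod.fst (hstepE n hn)
    constructor
    · obtain ⟨k, hk⟩ := pick1_mem_range e₁ z₁ _ (hex1 n)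
      rw [h1, hk]; exact he₁mem k
    · rw [h1]; exact pick1_not_mem _ _ _ (hex1 n)
  have hB1 : ∀ n, ¬ Even n → B n ∈ D₂ ∧ B n ∉ (S n).map Prod.snd := by
    intro n hn
    have h1 : B n = pick1 e₂ z₂ ((S n).map Prod.snd) := congrArg Prod.snd (hstepO n hn)
    constructor
    · obtain ⟨k, hk⟩ := pick1_mem_range e₂ z₂ _ (hex2 n)
      rw [h1, hk]; exact he₂mem k
    · rw [h1]; exact pick1_not_mem _ _ _ (hex2 n)
  -- the key invariant
  have key : ∀ n, (A n ∈ D₁ ∧ A n ∉ (S n).map Prod.fst) ∧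
      (B n ∈ D₂ ∧ B n ∉ (S n).map Prod.snd) ∧
      ((Even n ∧ dist (B n) (ψ (A n)) < Metric.infDist (A n) D₁ᶜ + 1/((n:ℝ)+1)) ∨
       (¬ Even n ∧ dist (A n) (φ (B n)) < 1/((n:ℝ)+1))) := by
    intro n
    induction n using Nat.strong_induction_on with
    | _ n ih =>
    have hfstD : ∀ x ∈ (S n).map Prod.fst, x ∈ D₁ := by
      intro x hx; rcases (memfst n x).mp hx with ⟨m, hm, rfl⟩; exact (ih m hm).1.1
    have hsndD : ∀ y ∈ (S n).map Prod.snd, y ∈ D₂ := by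
      intro y hy; rcases (memsnd n y).mp hy with ⟨m, hm, rfl⟩; exact (ih m hm).2.1.1
    by_cases hn : Even n
    · have hA := hA1 n hn
      have hr : (0:ℝ) < Metric.infDist (A n) D₁ᶜ + 1/((n:ℝ)+1) := by
        have h0 := Metric.infDist_nonneg (s := D₁ᶜ) (x := A n)
        positivity
      have hb : ∃ b, b ∈ D₂ ∧ b ∉ (S n).map Prod.snd ∧
          dist b (ψ (A n)) < Metric.infDist (A n) D₁ᶜ + 1/((n:ℝ)+1) := by
        obtain ⟨b, h1, h2, h3⟩ := aux_dense_avoid hd₂ (hψmem (A n) hA.1)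
          (((S n).map Prod.snd).finite_toSet) hsndD hr
        exact ⟨b, h1, h2, h3⟩
      have hBeq : B n = pick2 (fun b => b ∈ D₂ ∧ b ∉ (S n).map Prod.snd ∧
          dist b (ψ (A n)) < Metric.infDist (A n) D₁ᶜ + 1/((n:ℝ)+1)) z₂ := by
        have h1 : A n = pick1 e₁ z₁ ((S n).map Prod.fst) := congrArg Prod.fst (hstepE n hn)
        have h2 := congrArg Prod.snd (hstepE n hn)
        show (st n (S n)).2 = _
        rw [h2, ← h1]
      have hBprop := pick2_spec z₂ hb
      rw [← hBeq] at hBprop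
      exact ⟨hA, ⟨hBprop.1, hBprop.2.1⟩, Or.inl ⟨hn, hBprop.2.2⟩⟩
    · have hB := hB1 n hn
      have hr : (0:ℝ) < 1/((n:ℝ)+1) := by positivity
      have ha : ∃ a, a ∈ D₁ ∧ a ∉ (S n).map Prod.fst ∧
          dist a (φ (B n)) < 1/((n:ℝ)+1) := by
        obtain ⟨a, h1, h2, h3⟩ := aux_dense_avoid hd₁ (hφmem (B n) hB.1)
          (((S n).map Prod.fst).finite_toSet) hfstD hr
        exact ⟨a, h1, h2, h3⟩
      have hAeq : A n = pick2 (fun a => a ∈ D₁ ∧ a ∉ (S n).map Prod.fst ∧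
          dist a (φ (B n)) < 1/((n:ℝ)+1)) z₁ := by
        have h1 : B n = pick1 e₂ z₂ ((S n).map Prod.snd) := congrArg Prod.snd (hstepO n hn)
        have h2 := congrArg Prod.fst (hstepO n hn)
        show (st n (S n)).1 = _
        rw [h2, ← h1]
      have hAprop := pick2_spec z₁ ha
      rw [← hAeq] at hAprop
      exact ⟨⟨hAprop.1, hAprop.2.1⟩, hB, Or.inr ⟨hn, hAprop.2.2⟩⟩
  -- injectivity
  have hAne : ∀ {m n : ℕ}, m < n → A m ≠ A n := by
    intro m n hmn h
    exact (key n).1.2 ((memfst n (A n)).mpr ⟨m, hmn, h⟩)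
  have hBne : ∀ {m n : ℕ}, m < n → B m ≠ B n := by
    intro m n hmn h
    exact (key n).2.1.2 ((memsnd n (B n)).mpr ⟨m, hmn, h⟩)
  have injA : Function.Injective A := by
    intro m n h
    rcases lt_trichotomy m n with hc | hc | hc
    · exact absurd h (hAne hc)
    · exact hc
    · exact absurd h.symm (hAne hc)
  have injB : Function.Injective B := by
    intro m n h
    rcases lt_trichotomy m n with hc | hc | hc
    · exact absurd h (hBne hc)
    · exact hc
    · exact absurd h.symm (hBne hc)
  -- covering
  have covA : ∀ k, ∃ m, m < 2*k+2 ∧ A m = e₁ k := by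
    intro k
    induction k using Nat.strong_induction_on with
    | _ k ih =>
    by_cases h : ∃ m, m < 2*k ∧ A m = e₁ k
    · obtain ⟨m, hm, hme⟩ := h
      exact ⟨m, by omega, hme⟩
    · have hkn : e₁ k ∉ (S (2*k)).map Prod.fst := fun hc => h ((memfst _ _).mp hc)
      have hmin : ∀ j < k, e₁ j ∈ (S (2*k)).map Prod.fst := by
        intro j hj
        obtain ⟨m, hm, hme⟩ := ih j hj
        exact (memfst _ _).mpr ⟨m, by omega, hme⟩
      have heven : Even (2*k) := even_two_mul k
      have hthis : A (2*k) = e₁ k := by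
        have h1 : A (2*k) = pick1 e₁ z₁ ((S (2*k)).map Prod.fst) :=
          congrArg Prod.fst (hstepE _ heven)
        rw [h1]; exact pick1_eq _ _ _ hkn hmin
      exact ⟨2*k, by omega, hthis⟩
  have covB : ∀ k, ∃ m, m < 2*k+3 ∧ B m = e₂ k := by
    intro k
    induction k using Nat.strong_induction_on with
    | _ k ih =>
    by_cases h : ∃ m, m < 2*k+1 ∧ B m = e₂ k
    · obtain ⟨m, hm, hme⟩ := h; exact ⟨m, by omega, hme⟩
    · have hkn : e₂ k ∉ (S (2*k+1)).map Prod.snd := fun hc => h ((memsnd _ _).mp hc)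
      have hmin : ∀ j < k, e₂ j ∈ (S (2*k+1)).map Prod.snd := by
        intro j hj
        obtain ⟨m, hm, hme⟩ := ih j hj
        exact (memsnd _ _).mpr ⟨m, by omega, hme⟩
      have hodd : ¬ Even (2*k+1) := by
        simp [Nat.even_add_one]
      have hthis : B (2*k+1) = e₂ k := by
        have h1 : B (2*k+1) = pick1 e₂ z₂ ((S (2*k+1)).map Prod.snd) :=
          congrArg Prod.snd (hstepO _ hodd)
        rw [h1]; exact pick1_eq _ _ _ hkn hmin
      exact ⟨2*k+1, by omega, hthis⟩
  have hcovA : ∀ x ∈ D₁, ∃ n, A n = x := by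
    intro x hx; obtain ⟨k, rfl⟩ := he₁surj x hx
    obtain ⟨m, _, hm⟩ := covA k; exact ⟨m, hm⟩
  have hcovB : ∀ y ∈ D₂, ∃ n, B n = y := by
    intro y hy; obtain ⟨k, rfl⟩ := he₂surj y hy
    obtain ⟨m, _, hm⟩ := covB k; exact ⟨m, hm⟩
  -- the bijection
  set F : X₁ → X₂ := fun x =>
    if h : x ∈ D₁ then B (hcovA x h).choose else (bf ⟨x, h⟩ : X₂) with hFdef
  set G : X₂ → X₁ := fun y =>
    if h : y ∈ D₂ then A (hcovB y h).choose else (bf.symm ⟨y, h⟩ : X₁) with hGdef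
  have hFA : ∀ n, F (A n) = B n := by
    intro n
    have hx : A n ∈ D₁ := (key n).1.1
    have h1 : F (A n) = B (hcovA (A n) hx).choose := dif_pos hx
    exact h1.trans (congrArg B (injA (hcovA (A n) hx).choose_spec))
  have hGB : ∀ n, G (B n) = A n := by
    intro n
    have hy : B n ∈ D₂ := (key n).2.1.1
    have h1 : G (B n) = A (hcovB (B n) hy).choose := dif_pos hy
    exact h1.trans (congrArg A (injB (hcovB (B n) hy).choose_spec))
  have hFbd : ∀ x (h : x ∉ D₁), F x = (bf ⟨x, h⟩ : X₂) := fun x h => dif_neg h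
  have hGbd : ∀ y (h : y ∉ D₂), G y = (bf.symm ⟨y, h⟩ : X₁) := fun y h => dif_neg h
  have hGF : ∀ x, G (F x) = x := by
    intro x
    by_cases hx : x ∈ D₁
    · obtain ⟨n, rfl⟩ := hcovA x hx
      rw [hFA, hGB]
    · rw [hFbd x hx]
      have h2 : ((bf ⟨x, hx⟩ : X₂) : X₂) ∉ D₂ := (bf ⟨x, hx⟩).2
      rw [hGbd _ h2]
      have h3 : (⟨(bf ⟨x, hx⟩ : X₂), h2⟩ : (D₂ᶜ : Set X₂)) = bf ⟨x, hx⟩ := Subtype.ext rfl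
      rw [h3, Homeomorph.symm_apply_apply]
  have hFG : ∀ y, F (G y) = y := by
    intro y
    by_cases hy : y ∈ D₂
    · obtain ⟨n, rfl⟩ := hcovB y hy
      rw [hGB, hFA]
    · rw [hGbd y hy]
      have h2 : ((bf.symm ⟨y, hy⟩ : X₁) : X₁) ∉ D₁ := (bf.symm ⟨y, hy⟩).2
      rw [hFbd _ h2]
      have h3 : (⟨(bf.symm ⟨y, hy⟩ : X₁), h2⟩ : (D₁ᶜ : Set X₁)) = bf.symm ⟨y, hy⟩ :=
        Subtype.ext rfl
      rw [h3, Homeomorph.apply_symm_apply]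
  -- uniform continuity of the boundary map
  haveI hcs : CompactSpace (D₁ᶜ : Set X₁) := isCompact_iff_compactSpace.mp hcl₁.isCompact
  have hΦcont : Continuous Φc := continuous_subtype_val.comp bf.continuous
  have hUC : ∀ ε : ℝ, 0 < ε → ∃ δ : ℝ, 0 < δ ∧ ∀ w w' : (D₁ᶜ : Set X₁),
      dist (w:X₁) (w':X₁) < δ → dist (Φc w) (Φc w') < ε := by
    intro ε hε
    have huc := CompactSpace.uniformContinuous_of_continuous hΦcont
    rcases Metric.uniformContinuous_iff.mp huc ε hε with ⟨δ, hδ, H⟩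
    exact ⟨δ, hδ, fun w w' h => H (by rwa [Subtype.dist_eq])⟩
  -- finiteness of bad sets
  have hbad : ∀ ε : ℝ, 0 < ε → {x | x ∈ D₁ ∧ ε ≤ dist (F x) (ψ x)}.Finite := by
    intro ε hε
    obtain ⟨δ, hδ, hucd⟩ := hUC (ε/4) (by positivity)
    set c := min (ε/4) (δ/2) with hcdef
    have hc : 0 < c := lt_min (by positivity) (by positivity)
    have hN : {n : ℕ | c ≤ 1/((n:ℝ)+1)}.Finite := aux_finite_inv hc
    have hE1 : {x | x ∈ D₁ ∧ ε/2 ≤ Metric.infDist x D₁ᶜ}.Finite :=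
      aux_finite_far hiso₁ (by positivity)
    have hE2 : {y | y ∈ D₂ ∧ ε/2 ≤ Metric.infDist y D₂ᶜ}.Finite :=
      aux_finite_far hiso₂ (by positivity)
    have hsub : {x | x ∈ D₁ ∧ ε ≤ dist (F x) (ψ x)} ⊆
        (A '' {n : ℕ | c ≤ 1/((n:ℝ)+1)}) ∪ {x | x ∈ D₁ ∧ ε/2 ≤ Metric.infDist x D₁ᶜ}
          ∪ (A '' (B ⁻¹' {y | y ∈ D₂ ∧ ε/2 ≤ Metric.infDist y D₂ᶜ})) := by
      rintro x ⟨hxD, hxb⟩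
      obtain ⟨n, rfl⟩ := hcovA x hxD
      rw [hFA] at hxb
      by_cases hcn : c ≤ 1/((n:ℝ)+1)
      · exact Or.inl (Or.inl ⟨n, hcn, rfl⟩)
      push_neg at hcn
      have hcn4 : 1/((n:ℝ)+1) < ε/4 := lt_of_lt_of_le hcn (min_le_left _ _)
      have hcnδ : 1/((n:ℝ)+1) < δ/2 := lt_of_lt_of_le hcn (min_le_right _ _)
      rcases (key n).2.2 with ⟨hne, hq⟩ | ⟨hno, hq⟩
      · refine Or.inl (Or.inr ⟨hxD, ?_⟩)
        linarith
      · refine Or.inr ?_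
        have hBD : B n ∈ D₂ := (key n).2.1.1
        refine ⟨n, ⟨hBD, ?_⟩, rfl⟩
        set p : (D₁ᶜ : Set X₁) := bf.symm ⟨π₂ (B n), (hπ₂ (B n) hBD).1⟩ with hpdef
        have hφB : φ (B n) = (p : X₁) := by rw [hφval (B n) hBD]
        set q : (D₁ᶜ : Set X₁) := ⟨π₁ (A n), (hπ₁ (A n) hxD).1⟩ with hqdef
        have hψA : ψ (A n) = Φc q := hψval (A n) hxD
        have h5 : Metric.infDist (A n) D₁ᶜ ≤ dist (A n) (φ (B n)) :=
          Metric.infDist_le_dist_of_mem (by rw [hφB]; exact p.2)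
        have h6 : dist (A n) (π₁ (A n)) = Metric.infDist (A n) D₁ᶜ := (hπ₁ (A n) hxD).2
        have hd1 : dist (p:X₁) (A n) < 1/((n:ℝ)+1) := by rw [← hφB, dist_comm]; exact hq
        have hd2 : dist (A n) (q:X₁) < 1/((n:ℝ)+1) := by
          have hqv : dist (A n) (q:X₁) = Metric.infDist (A n) D₁ᶜ := h6
          rw [hqv]; exact lt_of_le_of_lt h5 hq
        have hpq : dist (p:X₁) (q:X₁) < δ :=
          calc dist (p:X₁) (q:X₁) ≤ dist (p:X₁) (A n) + dist (A n) (q:X₁) :=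
              dist_triangle _ _ _
            _ < 1/((n:ℝ)+1) + 1/((n:ℝ)+1) := by linarith
            _ < δ := by linarith
        have h7 : dist (Φc p) (Φc q) < ε/4 := hucd p q hpq
        have h8 : Φc p = π₂ (B n) := by
          rw [hpdef, hΦcdef]; simp only
          rw [Homeomorph.apply_symm_apply]
        have h9 : dist (B n) (π₂ (B n)) = Metric.infDist (B n) D₂ᶜ := (hπ₂ (B n) hBD).2
        have h10 : dist (B n) (ψ (A n)) ≤
            dist (B n) (π₂ (B n)) + dist (π₂ (B n)) (ψ (A n)) := dist_triangle _ _ _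
        have h11 : dist (π₂ (B n)) (ψ (A n)) < ε/4 := by rw [hψA, ← h8]; exact h7
        linarith
    exact (((hN.image A).union hE1).union
      ((hE2.preimage (Function.Injective.injOn injB)).image A)).subset hsub
  -- continuity of F
  have hFcont : Continuous F := by
    rw [continuous_iff_continuousAt]
    intro x₀
    by_cases hx₀ : x₀ ∈ D₁
    · have hmem : {x₀} ∈ nhds x₀ := (hiso₁ x₀ hx₀).mem_nhds rfl
      have hev : F =ᶠ[nhds x₀] fun _ => F x₀ := by
        filter_upwards [hmem] with y hy
        rw [Set.mem_singleton_iff] at hy; rw [hy]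
      exact hev.continuousAt
    · rw [Metric.continuousAt_iff]
      intro ε hε
      obtain ⟨δ₁, hδ₁, hucd⟩ := hUC (ε/4) (by positivity)
      have hBf := hbad (ε/2) (by positivity)
      have hx₀Bad : x₀ ∉ {x | x ∈ D₁ ∧ ε/2 ≤ dist (F x) (ψ x)} := fun h => hx₀ h.1
      have hop : IsOpen {x | x ∈ D₁ ∧ ε/2 ≤ dist (F x) (ψ x)}ᶜ := hBf.isClosed.isOpen_compl
      obtain ⟨δ₂, hδ₂, hball⟩ := Metric.isOpen_iff.mp hop x₀ hx₀Bad
      refine ⟨min (δ₁/4) δ₂, lt_min (by positivity) hδ₂, ?_⟩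
      intro x hx
      have hxδ1 : dist x x₀ < δ₁/4 := lt_of_lt_of_le hx (min_le_left _ _)
      have hxδ2 : dist x x₀ < δ₂ := lt_of_lt_of_le hx (min_le_right _ _)
      have hFx₀ : F x₀ = Φc ⟨x₀, hx₀⟩ := hFbd x₀ hx₀
      by_cases hxD : x ∈ D₁
      · have hxnb : x ∉ {x | x ∈ D₁ ∧ ε/2 ≤ dist (F x) (ψ x)} :=
          hball (Metric.mem_ball.mpr hxδ2)
        have h1 : dist (F x) (ψ x) < ε/2 := by
          by_contra hcon; push_neg at hcon; exact hxnb ⟨hxD, hcon⟩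
        have hq : ψ x = Φc ⟨π₁ x, (hπ₁ x hxD).1⟩ := hψval x hxD
        have h2 : dist (π₁ x) x₀ < δ₁ := by
          have t1 : dist (π₁ x) x ≤ dist x x₀ := by
            rw [dist_comm, (hπ₁ x hxD).2]
            exact Metric.infDist_le_dist_of_mem hx₀
          calc dist (π₁ x) x₀ ≤ dist (π₁ x) x + dist x x₀ := dist_triangle _ _ _
            _ < δ₁/4 + δ₁/4 := by linarith
            _ < δ₁ := by linarith
        have h3 : dist (Φc ⟨π₁ x, (hπ₁ x hxD).1⟩) (Φc ⟨x₀, hx₀⟩) < ε/4 := hucd _ _ h2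
        calc dist (F x) (F x₀) ≤ dist (F x) (ψ x) + dist (ψ x) (F x₀) := dist_triangle _ _ _
          _ < ε/2 + ε/4 := by rw [hq] at h1; rw [hq, hFx₀]; linarith
          _ < ε := by linarith
      · have hFx : F x = Φc ⟨x, hxD⟩ := hFbd x hxD
        rw [hFx, hFx₀]
        have hfin := hucd ⟨x, hxD⟩ ⟨x₀, hx₀⟩ (show dist x x₀ < δ₁ by linarith)
        linarith
  -- assemble the homeomorphism
  refine ⟨Continuous.homeoOfEquivCompactToT2 (f := ⟨F, G, hGF, hFG⟩) hFcont, ?_, ?_⟩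
  · ext y
    simp only [Set.mem_image]
    constructor
    · rintro ⟨x, hx, rfl⟩
      show F x ∈ D₂
      obtain ⟨n, rfl⟩ := hcovA x hx
      rw [hFA]; exact (key n).2.1.1
    · intro hy
      obtain ⟨n, rfl⟩ := hcovB y hy
      exact ⟨A n, (key n).1.1, hFA n⟩
  · intro x
    show F (x:X₁) = _
    have hx : (x:X₁) ∉ D₁ := x.2
    rw [hFbd _ hx]
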